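/- In the small CM setup, let g₁, g₂ be invertible rational 2×2 matrices with det g₁ = det g₂. Then g₁·w̃ = w̃·g₂ and g₁·conj(w̃) = conj(w̃)·g₂ hold if and only if there exists a nonzero r ∈ ℚ(√D₀) with g₁ = ι_{z₁}(r) and g₂ = ι_{z₂}(r). (Lemma 2.6 of the paper: GSpin(U) is the image of the torus T = k_Dˣ under ι_Z = (ι_{z₁}, ι_{z₂}).) -/
import Mathlib


open Matrix Complex ComplexConjugate

/-- `√D₀ := i·√|D₀|`. -/
noncomputable def sd (D₀ : ℤ) : ℂ := Complex.I * Real.sqrt (D₀.natAbs)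

/-- The matrix `w_d(z₁,z₂) = (1/d)·[[z₁, −z₁z₂],[1, −z₂]]`. -/
noncomputable def wMat (d : ℕ) (z₁ z₂ : ℂ) : Matrix (Fin 2) (Fin 2) ℂ :=
  ((d : ℂ))⁻¹ • !![z₁, -z₁ * z₂; 1, -z₂]

/-- Entrywise complex conjugation of a matrix. -/
noncomputable def matConj (m : Matrix (Fin 2) (Fin 2) ℂ) : Matrix (Fin 2) (Fin 2) ℂ :=
  m.map (starRingEnd ℂ)

/-- Lemma 2.6 of the paper: a pair `(g₁,g₂)` of invertible rational matrices with equal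
determinants satisfies `g₁w̃ = w̃g₂` and `g₁·conj(w̃) = conj(w̃)·g₂` if and only if
`g₁ = ι_{z₁}(r)` and `g₂ = ι_{z₂}(r)` for some nonzero `r ∈ ℚ(√D₀)`. -/
theorem stmt_6 (D₀ : ℤ) (hD₀ : D₀ < 0) (t₁ t₂ a₁ a₂ d : ℕ)
    (ht₁ : 0 < t₁) (ht₂ : 0 < t₂) (ha₁ : 0 < a₁) (ha₂ : 0 < a₂) (hd : 0 < d)
    (b₁ b₂ : ℤ) (z₁ z₂ : ℂ)
    (hz₁ : z₁ = ((b₁ : ℂ) + (t₁ : ℂ) * sd D₀) / (2 * (a₁ : ℂ)))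
    (hz₂ : z₂ = ((b₂ : ℂ) + (t₂ : ℂ) * sd D₀) / (2 * (a₂ : ℂ)))
    (g₁ g₂ : Matrix (Fin 2) (Fin 2) ℚ) (hu₁ : IsUnit g₁) (hu₂ : IsUnit g₂)
    (hdet : g₁.det = g₂.det) :
    ((g₁.map fun q : ℚ => (q : ℂ)) * wMat d z₁ (conj z₂) =
        wMat d z₁ (conj z₂) * (g₂.map fun q : ℚ => (q : ℂ)) ∧
      (g₁.map fun q : ℚ => (q : ℂ)) * matConj (wMat d z₁ (conj z₂)) =
        matConj (wMat d z₁ (conj z₂)) * (g₂.map fun q : ℚ => (q : ℂ))) ↔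
    (∃ r : ℂ, r ≠ 0 ∧ (∃ x y : ℚ, r = (x : ℂ) + (y : ℂ) * sd D₀) ∧
      (g₁.map fun q : ℚ => (q : ℂ)).mulVec ![z₁, 1] = r • ![z₁, 1] ∧
      (g₁.map fun q : ℚ => (q : ℂ)).mulVec ![conj z₁, 1] = conj r • ![conj z₁, 1] ∧
      (g₂.map fun q : ℚ => (q : ℂ)).mulVec ![z₂, 1] = r • ![z₂, 1] ∧
      (g₂.map fun q : ℚ => (q : ℂ)).mulVec ![conj z₂, 1] = conj r • ![conj z₂, 1]) := by
  have hdc : (d : ℂ) ≠ 0 := Nat.cast_ne_zero.2 hd.ne'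
  have hsd : conj (sd D₀) = - sd D₀ := by simp [sd]
  have hsdne : sd D₀ ≠ 0 := by
    have h1 : (0:ℝ) < (D₀.natAbs : ℝ) := by have : D₀ ≠ 0 := hD₀.ne; positivity
    exact mul_ne_zero Complex.I_ne_zero (Complex.ofReal_ne_zero.2 (ne_of_gt (Real.sqrt_pos.2 h1)))
  have ha1 : (a₁:ℂ) ≠ 0 := Nat.cast_ne_zero.2 ha₁.ne'
  have ha2 : (a₂:ℂ) ≠ 0 := Nat.cast_ne_zero.2 ha₂.ne'
  have ht1 : (t₁:ℂ) ≠ 0 := Nat.cast_ne_zero.2 ht₁.ne'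
  have ht2 : (t₂:ℂ) ≠ 0 := Nat.cast_ne_zero.2 ht₂.ne'
  have hc₁ : conj z₁ = ((b₁ : ℂ) - (t₁ : ℂ) * sd D₀) / (2 * (a₁ : ℂ)) := by
    rw [hz₁, map_div₀]; simp [hsd, map_ofNat]; ring
  have hc₂ : conj z₂ = ((b₂ : ℂ) - (t₂ : ℂ) * sd D₀) / (2 * (a₂ : ℂ)) := by
    rw [hz₂, map_div₀]; simp [hsd, map_ofNat]; ring
  have hz1ne : z₁ - conj z₁ ≠ 0 := by
    have h : z₁ - conj z₁ = (t₁:ℂ) * sd D₀ / a₁ := by rw [hc₁, hz₁]; field_simp; ring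
    rw [h]; exact div_ne_zero (mul_ne_zero ht1 hsdne) ha1
  have hz2ne : z₂ - conj z₂ ≠ 0 := by
    have h : z₂ - conj z₂ = (t₂:ℂ) * sd D₀ / a₂ := by rw [hc₂, hz₂]; field_simp; ring
    rw [h]; exact div_ne_zero (mul_ne_zero ht2 hsdne) ha2
  have hcan : ∀ (A B M : Matrix (Fin 2) (Fin 2) ℂ),
      A * ((d:ℂ)⁻¹ • M) = ((d:ℂ)⁻¹ • M) * B ↔ A * M = M * B := by
    intro A B M
    rw [Matrix.mul_smul, Matrix.smul_mul]
    exact ⟨fun h => smul_right_injective _ (inv_ne_zero hdc) h, fun h => by rw [h]⟩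
  have hmc : matConj (wMat d z₁ (conj z₂)) =
      (d:ℂ)⁻¹ • !![conj z₁, -conj z₁ * z₂; 1, -z₂] := by
    ext i j
    fin_cases i <;> fin_cases j <;> simp [matConj, wMat, Matrix.map_apply]
  have hw : wMat d z₁ (conj z₂) = (d:ℂ)⁻¹ • !![z₁, -z₁ * conj z₂; 1, -conj z₂] := rfl
  rw [hmc, hw, hcan, hcan]
  constructor
  · rintro ⟨h1, -⟩
    have F00 := Matrix.ext_iff.2 h1 0 0
    have F01 := Matrix.ext_iff.2 h1 0 1
    have F10 := Matrix.ext_iff.2 h1 1 0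
    have F11 := Matrix.ext_iff.2 h1 1 1
    simp only [Matrix.mul_apply, Fin.sum_univ_two, Matrix.map_apply, Matrix.cons_val',
      Matrix.cons_val_zero, Matrix.cons_val_one, Matrix.head_cons, Matrix.empty_val',
      Matrix.cons_val_fin_one, Matrix.head_fin_const, Matrix.of_apply] at F00 F01 F10 F11
    have F00c := congrArg conj F00
    have F01c := congrArg conj F01
    have F10c := congrArg conj F10
    have F11c := congrArg conj F11
    simp only [map_add, map_neg, _root_.map_mul, Complex.conj_conj, _root_.map_ratCast, _root_.map_one]
      at F00c F01c F10c F11c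
    refine ⟨(↑(g₁ 1 0) : ℂ) * z₁ + ↑(g₁ 1 1), ?_, ?_, ?_, ?_, ?_, ?_⟩
    · intro h0
      have h0c : (↑(g₁ 1 0) : ℂ) * conj z₁ + ↑(g₁ 1 1) = 0 := by
        have := congrArg conj h0
        simpa using this
      have hu : (↑(g₁ 1 0) : ℂ) = 0 := by
        rcases mul_eq_zero.1 (show (↑(g₁ 1 0) : ℂ) * (z₁ - conj z₁) = 0 by
          linear_combination h0 - h0c) with h | h
        · exact h
        · exact absurd h hz1ne
      have hv : (↑(g₁ 1 1) : ℂ) = 0 := by linear_combination h0 - z₁ * hu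
      have hpq : (↑(g₁ 0 0) : ℂ) * z₁ + ↑(g₁ 0 1) = 0 := by
        linear_combination F00 - z₁ * F10 + z₁ * h0
      have hpqc : (↑(g₁ 0 0) : ℂ) * conj z₁ + ↑(g₁ 0 1) = 0 := by
        have := congrArg conj hpq
        simpa using this
      have hp : (↑(g₁ 0 0) : ℂ) = 0 := by
        rcases mul_eq_zero.1 (show (↑(g₁ 0 0) : ℂ) * (z₁ - conj z₁) = 0 by
          linear_combination hpq - hpqc) with h | h
        · exact h
        · exact absurd h hz1ne
      have hq : (↑(g₁ 0 1) : ℂ) = 0 := by linear_combination hpq - z₁ * hp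
      have hdet0 : g₁.det = 0 := by
        rw [Matrix.det_fin_two]
        have e1 : g₁ 0 0 = 0 := by exact_mod_cast hp
        have e2 : g₁ 0 1 = 0 := by exact_mod_cast hq
        rw [e1, e2]; ring
      have := (Matrix.isUnit_iff_isUnit_det g₁).1 hu₁
      rw [hdet0] at this
      exact not_isUnit_zero this
    · refine ⟨g₁ 1 1 + g₁ 1 0 * (b₁ : ℚ) / (2 * a₁), g₁ 1 0 * (t₁ : ℚ) / (2 * a₁), ?_⟩
      rw [hz₁]; push_cast; field_simp; ring
    · funext i; fin_cases i <;>
        simp only [Matrix.mulVec, dotProduct, Fin.sum_univ_two, Matrix.map_apply,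
          Matrix.cons_val_zero, Matrix.cons_val_one, Matrix.head_cons, Pi.smul_apply,
          smul_eq_mul, mul_one, Fin.isValue, Fin.mk_zero, Fin.mk_one]
      · linear_combination F00 - z₁ * F10
    · have hrc : conj ((↑(g₁ 1 0) : ℂ) * z₁ + ↑(g₁ 1 1)) =
          (↑(g₁ 1 0) : ℂ) * conj z₁ + ↑(g₁ 1 1) := by simp
      funext i; fin_cases i <;>
        simp only [Matrix.mulVec, dotProduct, Fin.sum_univ_two, Matrix.map_apply,
          Matrix.cons_val_zero, Matrix.cons_val_one, Matrix.head_cons, Pi.smul_apply,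
          smul_eq_mul, mul_one, Fin.isValue, Fin.mk_zero, Fin.mk_one, hrc]
      · linear_combination F00c - (conj z₁) * F10c
    · funext i; fin_cases i <;>
        simp only [Matrix.mulVec, dotProduct, Fin.sum_univ_two, Matrix.map_apply,
          Matrix.cons_val_zero, Matrix.cons_val_one, Matrix.head_cons, Pi.smul_apply,
          smul_eq_mul, mul_one, Fin.isValue, Fin.mk_zero, Fin.mk_one] <;>
        apply mul_left_cancel₀ hz2ne
      · linear_combination (-z₂^2) * F10 + z₂ * (conj z₂) * F10c - z₂ * F11 + (conj z₂) * F11c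
      · linear_combination (-z₂) * F10 + z₂ * F10c - F11 + F11c
    · have hrc : conj ((↑(g₁ 1 0) : ℂ) * z₁ + ↑(g₁ 1 1)) =
          (↑(g₁ 1 0) : ℂ) * conj z₁ + ↑(g₁ 1 1) := by simp
      funext i; fin_cases i <;>
        simp only [Matrix.mulVec, dotProduct, Fin.sum_univ_two, Matrix.map_apply,
          Matrix.cons_val_zero, Matrix.cons_val_one, Matrix.head_cons, Pi.smul_apply,
          smul_eq_mul, mul_one, Fin.isValue, Fin.mk_zero, Fin.mk_one, hrc] <;>
        apply mul_left_cancel₀ hz2ne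
      · linear_combination (-(conj z₂) * z₂) * F10 + (conj z₂)^2 * F10c
          - z₂ * F11 + (conj z₂) * F11c
      · linear_combination (-(conj z₂)) * F10 + (conj z₂) * F10c - F11 + F11c
  · rintro ⟨r, -, -, hA, hB, hC, hD⟩
    have A0 := congrFun hA 0
    have A1 := congrFun hA 1
    have B0 := congrFun hB 0
    have B1 := congrFun hB 1
    have C0 := congrFun hC 0
    have C1 := congrFun hC 1
    have D0 := congrFun hD 0
    have D1 := congrFun hD 1
    simp only [Matrix.mulVec, dotProduct, Fin.sum_univ_two, Matrix.map_apply,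
      Matrix.cons_val_zero, Matrix.cons_val_one, Matrix.head_cons, Pi.smul_apply,
      smul_eq_mul, mul_one, Fin.isValue, Fin.mk_zero, Fin.mk_one] at A0 A1 B0 B1 C0 C1 D0 D1
    constructor
    · ext i j
      fin_cases i <;> fin_cases j <;>
        simp only [Matrix.mul_apply, Fin.sum_univ_two, Matrix.map_apply, Matrix.cons_val',
          Matrix.cons_val_zero, Matrix.cons_val_one, Matrix.head_cons, Matrix.empty_val',
          Matrix.cons_val_fin_one, Matrix.head_fin_const, Matrix.of_apply, Fin.isValue, Fin.mk_zero, Fin.mk_one] <;>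
        apply mul_left_cancel₀ hz2ne
      · linear_combination (z₂ - conj z₂) * A0 - z₁ * C0 + z₁ * D0
          + z₁ * (conj z₂) * C1 - z₁ * (conj z₂) * D1
      · linear_combination (-(conj z₂) * (z₂ - conj z₂)) * A0 + z₁ * (conj z₂) * C0
          - z₁ * z₂ * D0 - z₁ * (conj z₂)^2 * C1 + z₁ * (conj z₂) * z₂ * D1
      · linear_combination (z₂ - conj z₂) * A1 - C0 + D0 + (conj z₂) * C1 - (conj z₂) * D1
      · linear_combination (-(conj z₂) * (z₂ - conj z₂)) * A1 + (conj z₂) * C0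
          - z₂ * D0 - (conj z₂)^2 * C1 + (conj z₂) * z₂ * D1
    · ext i j
      fin_cases i <;> fin_cases j <;>
        simp only [Matrix.mul_apply, Fin.sum_univ_two, Matrix.map_apply, Matrix.cons_val',
          Matrix.cons_val_zero, Matrix.cons_val_one, Matrix.head_cons, Matrix.empty_val',
          Matrix.cons_val_fin_one, Matrix.head_fin_const, Matrix.of_apply, Fin.isValue, Fin.mk_zero, Fin.mk_one] <;>
        apply mul_left_cancel₀ hz2ne
      · linear_combination (z₂ - conj z₂) * B0 - (conj z₁) * C0 + (conj z₁) * D0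
          + (conj z₁) * z₂ * C1 - (conj z₁) * z₂ * D1
      · linear_combination (-z₂ * (z₂ - conj z₂)) * B0 + (conj z₁) * (conj z₂) * C0
          - (conj z₁) * z₂ * D0 - (conj z₁) * z₂ * (conj z₂) * C1 + (conj z₁) * z₂^2 * D1
      · linear_combination (z₂ - conj z₂) * B1 - C0 + D0 + z₂ * C1 - z₂ * D1
      · linear_combination (-z₂ * (z₂ - conj z₂)) * B1 + (conj z₂) * C0
          - z₂ * D0 - z₂ * (conj z₂) * C1 + z₂^2 * D1
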